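/- Let M₁, …, M_k be matroids on a common finite ground set V and let w : V → ℝ≥0. Then the fractional w-covering number τ*_w of the k-tuple is at most k times the maximum weight ν_w of a common independent set: τ*_w ≤ k·ν_w. -/

import Mathlib

/-- Matroid axioms for a family of finsets. -/
def IsMatroid {V : Type*} [DecidableEq V] (M : Set (Finset V)) : Prop :=
  (∅ : Finset V) ∈ M ∧ (∀ S ∈ M, ∀ T, T ⊆ S → T ∈ M) ∧
  ∀ S ∈ M, ∀ T ∈ M, S.card < T.card → ∃ v ∈ T \ S, insert v S ∈ M

/-- The span (closure) of `A` in the matroid `M`. -/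
def spanM {V : Type*} [DecidableEq V] (M : Set (Finset V)) (A : Finset V) : Set V :=
  {x | x ∈ A ∨ ∃ S : Finset V, S ⊆ A ∧ S ∈ M ∧ insert x S ∉ M}

/-- `(f₁,…,f_k)` is a `w`-fractional cover: `∑ᵢ fᵢ^{Mᵢ}(v) ≥ w v` for every `v`, where
`fᵢ^{Mᵢ}(v) = max_{T : v ∈ span_{Mᵢ}(T)} min_{u ∈ T} fᵢ(u)` (expressed via witnesses
`T i` and lower bounds `r i`). -/
def IsFracCover {V : Type*} [Fintype V] [DecidableEq V] (k : ℕ)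
    (M : Fin k → Set (Finset V)) (w : V → ℝ) (f : Fin k → V → ℝ) : Prop :=
  (∀ i v, 0 ≤ f i v) ∧
  ∀ v : V, ∃ (T : Fin k → Finset V) (r : Fin k → ℝ),
    (∀ i, v ∈ spanM (M i) (T i)) ∧ (∀ i, ∀ u ∈ T i, r i ≤ f i u) ∧ w v ≤ ∑ i, r i

/-- Sum over an image is at most the pushed-forward sum, for nonnegative weights. -/
lemma sum_image_le_aux {ι V : Type*} [DecidableEq ι] [DecidableEq V] (s : Finset ι) (g : ι → V)
    (w : V → ℝ) (hw : ∀ x, 0 ≤ w x) : ∑ x ∈ s.image g, w x ≤ ∑ i ∈ s, w (g i) := by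
  induction s using Finset.induction_on with
  | empty => simp
  | @insert a s ha ih =>
    rw [Finset.image_insert, Finset.sum_insert ha]
    by_cases h : g a ∈ s.image g
    · rw [Finset.insert_eq_self.2 h]
      have := hw (g a)
      linarith
    · rw [Finset.sum_insert h]
      linarith

/-- Grow an independent set to the size of another independent set. -/
lemma matroid_grow {V : Type*} [DecidableEq V] {M : Set (Finset V)} (hM : IsMatroid M) :
    ∀ (n : ℕ) (C B : Finset V), C ∈ M → B ∈ M → C.card + n = B.card →
      ∃ C', C ⊆ C' ∧ C' ⊆ C ∪ B ∧ C'.card = B.card ∧ C' ∈ M := by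
  intro n
  induction n with
  | zero =>
    intro C B hC _ hcard
    exact ⟨C, Finset.Subset.refl C, Finset.subset_union_left, by simpa using hcard, hC⟩
  | succ n ih =>
    intro C B hC hB hcard
    have hlt : C.card < B.card := by omega
    obtain ⟨x, hx, hins⟩ := hM.2.2 C hC B hB hlt
    have hxC : x ∉ C := (Finset.mem_sdiff.1 hx).2
    have hxB : x ∈ B := (Finset.mem_sdiff.1 hx).1
    have hcard' : (insert x C).card + n = B.card := by
      rw [Finset.card_insert_of_notMem hxC]; omega
    obtain ⟨C', h1, h2, h3, h4⟩ := ih (insert x C) B hins hB hcard'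
    refine ⟨C', (Finset.subset_insert x C).trans h1, ?_, h3, h4⟩
    intro y hy
    rcases Finset.mem_union.1 (h2 hy) with hy' | hy'
    · rcases Finset.mem_insert.1 hy' with rfl | hy''
      · exact Finset.mem_union_right _ hxB
      · exact Finset.mem_union_left _ hy''
    · exact Finset.mem_union_right _ hy'

/-- Removing an element of a minimal dependency from `I` allows inserting `v`. -/
lemma circuit_erase {V : Type*} [DecidableEq V] {M : Set (Finset V)} (hM : IsMatroid M)
    {I D : Finset V} {v : V} (hI : I ∈ M) (hv : v ∉ I) (hDI : D ⊆ I)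
    (hdep : insert v D ∉ M) (hmin : ∀ u ∈ D, insert v (D.erase u) ∈ M)
    {u : V} (hu : u ∈ D) : insert v (I.erase u) ∈ M := by
  have hvD : v ∉ D := fun h => hv (hDI h)
  have hC0 : insert v (D.erase u) ∈ M := hmin u hu
  have huv : u ≠ v := fun h => hvD (h ▸ hu)
  have hcardC0 : (insert v (D.erase u)).card = D.card := by
    rw [Finset.card_insert_of_notMem (fun h => hvD (Finset.erase_subset u D h)),
      Finset.card_erase_of_mem hu]
    have : 0 < D.card := Finset.card_pos.2 ⟨u, hu⟩
    omega
  have hDle : D.card ≤ I.card := Finset.card_le_card hDI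
  obtain ⟨C', h1, h2, h3, h4⟩ := matroid_grow hM (I.card - D.card) (insert v (D.erase u)) I hC0 hI
    (by omega)
  -- `u ∉ C'`, otherwise `insert v D ⊆ C'` would be independent.
  have huC' : u ∉ C' := by
    intro huC'
    apply hdep
    refine hM.2.1 C' h4 _ ?_
    intro x hx
    rcases Finset.mem_insert.1 hx with rfl | hxD
    · exact h1 (Finset.mem_insert_self _ _)
    · by_cases hxu : x = u
      · exact hxu ▸ huC'
      · exact h1 (Finset.mem_insert_of_mem (Finset.mem_erase.2 ⟨hxu, hxD⟩))
  have hsub : C' ⊆ insert v (I.erase u) := by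
    intro x hx
    have hx' : x ∈ insert v I := by
      rcases Finset.mem_union.1 (h2 hx) with hx' | hx'
      · rcases Finset.mem_insert.1 hx' with rfl | hx''
        · exact Finset.mem_insert_self _ _
        · exact Finset.mem_insert_of_mem (hDI (Finset.erase_subset u D hx''))
      · exact Finset.mem_insert_of_mem hx'
    rcases Finset.mem_insert.1 hx' with rfl | hxI
    · exact Finset.mem_insert_self _ _
    · refine Finset.mem_insert_of_mem (Finset.mem_erase.2 ⟨?_, hxI⟩)
      intro h; exact huC' (h ▸ hx)
  have hcards : (insert v (I.erase u)).card ≤ C'.card := by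
    have huI : u ∈ I := hDI hu
    have : v ∉ I.erase u := fun h => hv (Finset.erase_subset u I h)
    rw [Finset.card_insert_of_notMem this, Finset.card_erase_of_mem huI, h3]
    have : 0 < I.card := Finset.card_pos.2 ⟨u, huI⟩
    omega
  have := Finset.eq_of_subset_of_card_le hsub hcards
  rw [← this]
  exact h4

/-- `τ*_w ≤ k · ν_w`: the fractional `w`-covering number of a `k`-tuple of
matroids is at most `k` times the maximum `w`-weight of a common independent set. -/
theorem stmt_9 {V : Type*} [Fintype V] [DecidableEq V] (k : ℕ)
    (M : Fin k → Set (Finset V)) (hM : ∀ i, IsMatroid (M i))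
    (w : V → ℝ) (hw : ∀ v, 0 ≤ w v) :
    sInf {t : ℝ | ∃ f : Fin k → V → ℝ, IsFracCover k M w f ∧ t = ∑ i, ∑ v, f i v}
      ≤ k * sSup {t : ℝ | ∃ I : Finset V, (∀ i, I ∈ M i) ∧ t = ∑ v ∈ I, w v} := by
  classical
  set Scov := {t : ℝ | ∃ f : Fin k → V → ℝ, IsFracCover k M w f ∧ t = ∑ i, ∑ v, f i v} with hScov
  set Sind := {t : ℝ | ∃ I : Finset V, (∀ i, I ∈ M i) ∧ t = ∑ v ∈ I, w v} with hSind
  have hbddBelow : BddBelow Scov := by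
    refine ⟨0, fun t ht => ?_⟩
    obtain ⟨f, ⟨hf0, _⟩, rfl⟩ := ht
    exact Finset.sum_nonneg fun i _ => Finset.sum_nonneg fun x _ => hf0 i x
  -- the case `k = 0`
  rcases Nat.eq_zero_or_pos k with hk | hk
  · subst hk
    have h0 : (0:ℝ) ≤ 0 * sSup Sind := by simp
    by_cases hS : Scov.Nonempty
    · obtain ⟨t, ht⟩ := hS
      have ht0 : t = 0 := by
        obtain ⟨f, _, rfl⟩ := ht
        simp
      calc sInf Scov ≤ t := csInf_le hbddBelow ht
        _ = (0:ℕ) * sSup Sind := by rw [ht0]; simp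
    · rw [Set.not_nonempty_iff_eq_empty] at hS
      rw [hS, Real.sInf_empty]
      simp
  -- main case `k ≥ 1`
  -- pick a maximum-weight common independent set `I`
  set Fam : Finset (Finset V) := Finset.univ.filter (fun J => ∀ i, J ∈ M i) with hFam
  have hFamne : Fam.Nonempty := ⟨∅, Finset.mem_filter.2 ⟨Finset.mem_univ _, fun i => (hM i).1⟩⟩
  obtain ⟨I, hImem, hImax⟩ := Finset.exists_max_image Fam (fun J => ∑ x ∈ J, w x) hFamne
  have hIind : ∀ i, I ∈ M i := (Finset.mem_filter.1 hImem).2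
  -- the cover: `f i = w` restricted to `I`
  set f : Fin k → V → ℝ := fun _ x => if x ∈ I then w x else 0 with hf
  have hf0 : ∀ i x, 0 ≤ f i x := by
    intro i x
    simp only [hf]
    split
    · exact hw x
    · exact le_rfl
  have hcover : IsFracCover k M w f := by
    refine ⟨hf0, fun v => ?_⟩
    by_cases hvloop : ∃ i, insert v (∅ : Finset V) ∉ M i
    · -- `v` is a loop in some matroid: span of `∅` covers it
      obtain ⟨i0, hi0⟩ := hvloop
      refine ⟨fun i => if i = i0 then ∅ else {v}, fun i => if i = i0 then w v else 0,
        ?_, ?_, ?_⟩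
      · intro i
        by_cases h : i = i0
        · subst h
          simp only [if_pos rfl]
          exact Or.inr ⟨∅, Finset.Subset.refl _, (hM i).1, hi0⟩
        · simp only [if_neg h]
          exact Or.inl (Finset.mem_singleton_self v)
      · intro i u hu
        dsimp only at hu ⊢
        by_cases h : i = i0
        · rw [if_pos h] at hu; simp at hu
        · rw [if_neg h]; exact hf0 i u
      · rw [Finset.sum_ite_eq' Finset.univ i0 (fun _ => w v)]
        simp
    · push_neg at hvloop
      by_cases hvI : v ∈ I
      · -- `v ∈ I`: one coordinate suffices
        set i0 : Fin k := ⟨0, hk⟩ with hi0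
        refine ⟨fun _ => {v}, fun i => if i = i0 then w v else 0, ?_, ?_, ?_⟩
        · intro i; exact Or.inl (Finset.mem_singleton_self v)
        · intro i u hu
          dsimp only at hu ⊢
          rw [Finset.mem_singleton] at hu
          rw [hu]
          have hfv : f i v = w v := by simp [hf, hvI]
          rw [hfv]
          split
          · exact le_rfl
          · exact hw v
        · rw [Finset.sum_ite_eq' Finset.univ i0 (fun _ => w v)]
          simp
      · -- `v ∉ I`: fundamental-circuit argument
        have hstep : ∀ i : Fin k, ∃ (Ti : Finset V) (ri : ℝ) (ui : V),
            (v ∈ spanM (M i) Ti) ∧ (∀ x ∈ Ti, ri ≤ f i x) ∧ 0 ≤ ri ∧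
            ((insert v I ∈ M i ∧ ri = 0) ∨
              (ui ∈ I ∧ insert v (I.erase ui) ∈ M i ∧ ri = w ui)) := by
          intro i
          by_cases h : insert v I ∈ M i
          · exact ⟨{v}, 0, v, Or.inl (Finset.mem_singleton_self v),
              fun x hx => hf0 i x, le_refl 0, Or.inl ⟨h, rfl⟩⟩
          · -- choose a minimal dependency `D ⊆ I`
            set Dep : Finset (Finset V) :=
              I.powerset.filter (fun D => insert v D ∉ M i) with hDep
            have hDepne : Dep.Nonempty :=
              ⟨I, Finset.mem_filter.2 ⟨Finset.mem_powerset.2 (Finset.Subset.refl I), h⟩⟩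
            obtain ⟨D, hDmem, hDmin⟩ := Finset.exists_min_image Dep Finset.card hDepne
            have hDI : D ⊆ I := Finset.mem_powerset.1 (Finset.mem_filter.1 hDmem).1
            have hDdep : insert v D ∉ M i := (Finset.mem_filter.1 hDmem).2
            have hmin : ∀ u ∈ D, insert v (D.erase u) ∈ M i := by
              intro u hu
              by_contra hcon
              have hmem : D.erase u ∈ Dep := Finset.mem_filter.2
                ⟨Finset.mem_powerset.2 ((Finset.erase_subset u D).trans hDI), hcon⟩
              have := hDmin _ hmem
              have hlt : (D.erase u).card < D.card := Finset.card_erase_lt_of_mem hu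
              omega
            have hDne : D.Nonempty := by
              rcases Finset.eq_empty_or_nonempty D with rfl | hne
              · exact absurd (hvloop i) hDdep
              · exact hne
            obtain ⟨u0, hu0, hu0min⟩ := Finset.exists_min_image D w hDne
            have hDind : D ∈ M i := (hM i).2.1 I (hIind i) D hDI
            refine ⟨D, w u0, u0, Or.inr ⟨D, Finset.Subset.refl D, hDind, hDdep⟩, ?_,
              hw u0, Or.inr ⟨hDI hu0, circuit_erase (hM i) (hIind i) hvI hDI hDdep hmin hu0,
                rfl⟩⟩
            intro x hx
            have : f i x = w x := by simp [hf, hDI hx]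
            rw [this]
            exact hu0min x hx
        choose T r u hspan hbound hpos halt using hstep
        refine ⟨T, r, hspan, hbound, ?_⟩
        by_contra hlt
        push_neg at hlt
        set bad : Finset (Fin k) :=
          Finset.univ.filter (fun i => ¬(insert v I ∈ M i ∧ r i = 0)) with hbad
        set U : Finset V := bad.image u with hU
        set I' : Finset V := insert v (I \ U) with hI'
        have hI'ind : ∀ i, I' ∈ M i := by
          intro i
          by_cases hi : insert v I ∈ M i ∧ r i = 0
          · exact (hM i).2.1 _ hi.1 _ (Finset.insert_subset_insert v Finset.sdiff_subset)
          · have hibad : i ∈ bad := Finset.mem_filter.2 ⟨Finset.mem_univ _, hi⟩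
            rcases halt i with h' | ⟨huI, herase, hri⟩
            · exact absurd h' hi
            · refine (hM i).2.1 _ herase _ (Finset.insert_subset_insert v ?_)
              intro x hx
              rw [Finset.mem_sdiff] at hx
              refine Finset.mem_erase.2 ⟨?_, hx.1⟩
              intro h
              exact hx.2 (h ▸ Finset.mem_image_of_mem u hibad)
        have hI'mem : I' ∈ Fam := Finset.mem_filter.2 ⟨Finset.mem_univ _, hI'ind⟩
        have hle : ∑ x ∈ I', w x ≤ ∑ x ∈ I, w x := hImax I' hI'mem
        have hvnot : v ∉ I \ U := fun h => hvI (Finset.mem_sdiff.1 h).1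
        have hsplit : ∑ x ∈ I', w x = w v + ∑ x ∈ I \ U, w x := by
          rw [hI', Finset.sum_insert hvnot]
        have hIsplit : ∑ x ∈ I ∩ U, w x + ∑ x ∈ I \ U, w x = ∑ x ∈ I, w x :=
          Finset.sum_inter_add_sum_sdiff I U w
        have h1 : ∑ x ∈ I ∩ U, w x ≤ ∑ x ∈ U, w x :=
          Finset.sum_le_sum_of_subset_of_nonneg Finset.inter_subset_right
            (fun x _ _ => hw x)
        have h2 : ∑ x ∈ U, w x ≤ ∑ i ∈ bad, w (u i) := sum_image_le_aux bad u w hw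
        have h3 : ∑ i ∈ bad, w (u i) = ∑ i ∈ bad, r i := by
          refine Finset.sum_congr rfl fun i hi => ?_
          rcases halt i with h' | ⟨_, _, hri⟩
          · exact absurd h' (Finset.mem_filter.1 hi).2
          · rw [hri]
        have h4 : ∑ i ∈ bad, r i ≤ ∑ i, r i :=
          Finset.sum_le_sum_of_subset_of_nonneg (Finset.subset_univ bad)
            (fun i _ _ => hpos i)
        linarith
  -- conclude
  have hmemcov : (∑ i : Fin k, ∑ x, f i x) ∈ Scov := ⟨f, hcover, rfl⟩
  have hsumf : (∑ i : Fin k, ∑ x, f i x) = (k : ℝ) * ∑ x ∈ I, w x := by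
    have : ∀ i : Fin k, ∑ x, f i x = ∑ x ∈ I, w x := by
      intro i
      rw [hf]
      rw [Finset.sum_ite_mem Finset.univ I w, Finset.univ_inter]
    rw [Finset.sum_congr rfl (fun i _ => this i), Finset.sum_const, Finset.card_univ,
      Fintype.card_fin, nsmul_eq_mul]
  have hIle : (∑ x ∈ I, w x) ≤ sSup Sind := by
    refine le_csSup ⟨∑ x, w x, ?_⟩ ⟨I, hIind, rfl⟩
    rintro t ⟨J, _, rfl⟩
    exact Finset.sum_le_sum_of_subset_of_nonneg (Finset.subset_univ J) (fun x _ _ => hw x)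
  calc sInf Scov ≤ ∑ i : Fin k, ∑ x, f i x := csInf_le hbddBelow hmemcov
    _ = (k : ℝ) * ∑ x ∈ I, w x := hsumf
    _ ≤ (k : ℝ) * sSup Sind := by
        exact mul_le_mul_of_nonneg_left hIle (by positivity)
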